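/- Let e : (0,∞) → (0,1] be implicitly defined by e(r) + a r^{1/5} e(r)^{3/5} = 1 for all r > 0, with a > 0 (viscoelastic hard-spheres restitution). Then: (i) such e(r) exists and is unique for each r > 0; (ii) e(r) · a^{5/3} r^{1/3} → 1 as r → ∞; (iii) ℓ_{1/5}(e) := sup_{r>0} (1 − e(r))/r^{1/5} = a. -/

import Mathlib

open Filter

theorem viscoelastic_restitution (a : ℝ) (ha : 0 < a) (e : ℝ → ℝ)
    (hrange : ∀ r : ℝ, 0 < r → e r ∈ Set.Ioc (0:ℝ) 1)
    (himp : ∀ r : ℝ, 0 < r →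
      e r + a * r ^ ((1:ℝ)/5) * (e r) ^ ((3:ℝ)/5) = 1) :
    (∀ r : ℝ, 0 < r → ∃! x : ℝ,
        x ∈ Set.Ioc (0:ℝ) 1 ∧ x + a * r ^ ((1:ℝ)/5) * x ^ ((3:ℝ)/5) = 1) ∧
    Tendsto (fun r : ℝ => e r * a ^ ((5:ℝ)/3) * r ^ ((1:ℝ)/3)) atTop (nhds 1) ∧
    sSup {y : ℝ | ∃ r : ℝ, 0 < r ∧ y = (1 - e r) / r ^ ((1:ℝ)/5)} = a := by
  have key : ∀ r : ℝ, 0 < r → 1 - e r = a * r ^ ((1:ℝ)/5) * (e r) ^ ((3:ℝ)/5) := by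
    intro r hr; linarith [himp r hr]
  refine ⟨?_, ?_, ?_⟩
  · -- uniqueness
    intro r hr
    refine ⟨e r, ⟨hrange r hr, himp r hr⟩, ?_⟩
    rintro y ⟨hy, hyeq⟩
    by_contra hne
    have hc : 0 < a * r ^ ((1:ℝ)/5) := mul_pos ha (Real.rpow_pos_of_pos hr _)
    rcases lt_or_gt_of_ne hne with h | h
    · have h2 : y ^ ((3:ℝ)/5) < (e r) ^ ((3:ℝ)/5) :=
        Real.rpow_lt_rpow hy.1.le h (by norm_num)
      nlinarith [himp r hr]
    · have h2 : (e r) ^ ((3:ℝ)/5) < y ^ ((3:ℝ)/5) :=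
        Real.rpow_lt_rpow (hrange r hr).1.le h (by norm_num)
      nlinarith [himp r hr]
  · -- asymptotics
    have hid : ∀ r : ℝ, 0 < r →
        e r * a ^ ((5:ℝ)/3) * r ^ ((1:ℝ)/3) = (1 - e r) ^ ((5:ℝ)/3) := by
      intro r hr
      obtain ⟨he0, he1⟩ := hrange r hr
      rw [key r hr]
      rw [Real.mul_rpow (by positivity) (Real.rpow_nonneg he0.le _),
          Real.mul_rpow ha.le (Real.rpow_nonneg hr.le _),
          ← Real.rpow_mul hr.le, ← Real.rpow_mul he0.le]
      norm_num [Real.rpow_one]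
      ring
    have he0 : Tendsto e atTop (nhds 0) := by
      have hg : Tendsto (fun r : ℝ => ((a * r ^ ((1:ℝ)/5))⁻¹) ^ ((5:ℝ)/3))
          atTop (nhds 0) := by
        have h1 : Tendsto (fun r : ℝ => a * r ^ ((1:ℝ)/5)) atTop atTop :=
          (tendsto_rpow_atTop (by norm_num)).const_mul_atTop ha
        have h2 : Tendsto (fun r : ℝ => (a * r ^ ((1:ℝ)/5))⁻¹) atTop (nhds 0) :=
          h1.inv_tendsto_atTop
        have h3 := h2.rpow_const (p := (5:ℝ)/3) (Or.inr (by norm_num))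
        simpa [Real.zero_rpow (by norm_num : ((5:ℝ)/3) ≠ 0)] using h3
      refine tendsto_of_tendsto_of_tendsto_of_le_of_le' tendsto_const_nhds hg ?_ ?_
      · filter_upwards [eventually_gt_atTop (0:ℝ)] with r hr
        exact (hrange r hr).1.le
      · filter_upwards [eventually_gt_atTop (0:ℝ)] with r hr
        obtain ⟨he0, he1⟩ := hrange r hr
        have hc : 0 < a * r ^ ((1:ℝ)/5) := mul_pos ha (Real.rpow_pos_of_pos hr _)
        have h35 : (e r) ^ ((3:ℝ)/5) ≤ (a * r ^ ((1:ℝ)/5))⁻¹ := by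
          rw [inv_eq_one_div, le_div_iff₀ hc]
          nlinarith [key r hr]
        have := Real.rpow_le_rpow (Real.rpow_nonneg he0.le _) h35
          (by norm_num : (0:ℝ) ≤ 5/3)
        calc e r = ((e r) ^ ((3:ℝ)/5)) ^ ((5:ℝ)/3) := by
              rw [← Real.rpow_mul he0.le]; norm_num
          _ ≤ _ := this
    have h1e : Tendsto (fun r => (1 - e r) ^ ((5:ℝ)/3)) atTop (nhds 1) := by
      have : Tendsto (fun r => 1 - e r) atTop (nhds 1) := by
        simpa using tendsto_const_nhds.sub he0
      have h3 := this.rpow_const (p := (5:ℝ)/3) (Or.inl one_ne_zero)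
      simpa using h3
    refine h1e.congr' ?_
    filter_upwards [eventually_gt_atTop (0:ℝ)] with r hr
    exact (hid r hr).symm
  · -- supremum
    have hval : ∀ r : ℝ, 0 < r → (1 - e r) / r ^ ((1:ℝ)/5) = a * (e r) ^ ((3:ℝ)/5) := by
      intro r hr
      have hrp : (0:ℝ) < r ^ ((1:ℝ)/5) := Real.rpow_pos_of_pos hr _
      rw [key r hr]; field_simp
    set S := {y : ℝ | ∃ r : ℝ, 0 < r ∧ y = (1 - e r) / r ^ ((1:ℝ)/5)} with hS
    have hne : S.Nonempty := ⟨(1 - e 1) / (1:ℝ) ^ ((1:ℝ)/5), 1, one_pos, rfl⟩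
    have hub : ∀ y ∈ S, y ≤ a := by
      rintro y ⟨r, hr, rfl⟩
      obtain ⟨he0, he1⟩ := hrange r hr
      rw [hval r hr]
      have : (e r) ^ ((3:ℝ)/5) ≤ 1 :=
        Real.rpow_le_one he0.le he1 (by norm_num)
      nlinarith
    refine le_antisymm (Real.sSup_le hub ha.le) ?_
    rw [Real.le_sSup_iff ⟨a, hub⟩ hne]
    intro ε hε
    set δ : ℝ := (-ε) / a ^ 2 with hδ
    have hδ0 : 0 < δ := div_pos (by linarith) (by positivity)
    set r : ℝ := (δ/2) ^ (5:ℕ) with hrdef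
    have hr : 0 < r := by positivity
    have hr15 : r ^ ((1:ℝ)/5) = δ/2 := by
      rw [hrdef, ← Real.rpow_natCast (δ/2) 5, ← Real.rpow_mul (by positivity)]
      norm_num
    obtain ⟨he0, he1⟩ := hrange r hr
    refine ⟨(1 - e r) / r ^ ((1:ℝ)/5), ⟨r, hr, rfl⟩, ?_⟩
    rw [hval r hr]
    have hge : e r ≤ (e r) ^ ((3:ℝ)/5) := by
      have := Real.rpow_le_rpow_of_exponent_ge he0 he1 (by norm_num : (3:ℝ)/5 ≤ 1)
      simpa using this
    have hel : 1 - a * r ^ ((1:ℝ)/5) ≤ e r := by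
      have h35 : (e r) ^ ((3:ℝ)/5) ≤ 1 := Real.rpow_le_one he0.le he1 (by norm_num)
      have := key r hr
      nlinarith [Real.rpow_pos_of_pos hr ((1:ℝ)/5)]
    rw [hr15] at hel
    have haa : a ^ 2 * δ = -ε := by
      rw [hδ, mul_div_assoc']; exact mul_div_cancel_left₀ (-ε) (by positivity)
    nlinarith [mul_le_mul_of_nonneg_left hge ha.le,
      mul_le_mul_of_nonneg_left hel ha.le]
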